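/- arXiv:1906.04620 — 2 statements merged into one kernel-verified Lean document; each statement's English description precedes it below -/
import Mathlib

section
/- Let G be a finite group, S ⊆ G, and Γ = Cay(G,S). Then Cay(G,S) is a CI-digraph if and only if for every permutation σ of G such that the conjugate subgroup σ Ĝ σ⁻¹ is contained in Aut(Γ), there exists τ ∈ Aut(Γ) with σ Ĝ σ⁻¹ = τ Ĝ τ⁻¹; that is, every subgroup of Aut(Γ) conjugate to Ĝ in Perm G is conjugate to Ĝ in Aut(Γ). -/
/-- A permutation `e` is an automorphism of the digraph with adjacency `Adj`. -/
def IsDigraphAut {V : Type*} (Adj : V → V → Prop) (e : Equiv.Perm V) : Prop :=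
  ∀ x y, Adj x y ↔ Adj (e x) (e y)

/-- The automorphism group of a digraph, as a subgroup of the permutation group. -/
def autGroup {V : Type*} (Adj : V → V → Prop) : Subgroup (Equiv.Perm V) where
  carrier := {e | IsDigraphAut Adj e}
  one_mem' := by intro x y; exact Iff.rfl
  mul_mem' := by
    intro a b ha hb x y
    exact (hb x y).trans (ha (b x) (b y))
  inv_mem' := by
    intro a ha x y
    simpa using (ha (a⁻¹ x) (a⁻¹ y)).symm

/-- A digraph is arc-transitive if its automorphism group is transitive on arcs. -/
def ArcTransitive {V : Type*} (Adj : V → V → Prop) : Prop :=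
  ∀ x y u v, Adj x y → Adj u v → ∃ e ∈ autGroup Adj, e x = u ∧ e y = v

/-- A subgroup of the permutation group of `V` is regular on `V`. -/
def IsRegularSub {V : Type*} (H : Subgroup (Equiv.Perm V)) : Prop :=
  ∀ u v : V, ∃! h : H, (h : Equiv.Perm V) u = v

/-- A circulant: the automorphism group contains a regular cyclic subgroup. -/
def IsCirculant {V : Type*} (Adj : V → V → Prop) : Prop :=
  ∃ H : Subgroup (Equiv.Perm V), H ≤ autGroup Adj ∧ IsCyclic H ∧ IsRegularSub H

/-- A normal circulant: the automorphism group contains a regular cyclic subgroup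
that is normal in the automorphism group. -/
def IsNormalCirculant {V : Type*} (Adj : V → V → Prop) : Prop :=
  ∃ H : Subgroup (Equiv.Perm V), H ≤ autGroup Adj ∧ IsCyclic H ∧ IsRegularSub H ∧
    ∀ e ∈ autGroup Adj, ∀ h ∈ H, e * h * e⁻¹ ∈ H

/-- Tensor (direct) product of digraphs. -/
def tensorAdj {V₁ V₂ : Type*} (Adj₁ : V₁ → V₁ → Prop) (Adj₂ : V₂ → V₂ → Prop) :
    V₁ × V₂ → V₁ × V₂ → Prop :=
  fun p q => Adj₁ p.1 q.1 ∧ Adj₂ p.2 q.2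

/-- Lexicographic product `Γ[Kbar_b]` with the edgeless digraph on `b` vertices. -/
def lexAdj {V : Type*} (Adj : V → V → Prop) (b : ℕ) : V × Fin b → V × Fin b → Prop :=
  fun p q => Adj p.1 q.1

/-- Digraph isomorphism. -/
def DigraphIso {V₁ V₂ : Type*} (Adj₁ : V₁ → V₁ → Prop) (Adj₂ : V₂ → V₂ → Prop) : Prop :=
  ∃ e : V₁ ≃ V₂, ∀ x y, Adj₁ x y ↔ Adj₂ (e x) (e y)

/-- Connectedness: the reflexive–symmetric–transitive closure of adjacency
relates every pair of vertices. -/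
def DigraphConnected {V : Type*} (Adj : V → V → Prop) : Prop :=
  ∀ u v : V, Relation.ReflTransGen (fun a b => Adj a b ∨ Adj b a) u v

/-- R-thick digraph: two distinct vertices with the same in- and out-neighbourhoods. -/
def RThick {V : Type*} (Adj : V → V → Prop) : Prop :=
  ∃ u v : V, u ≠ v ∧ (∀ w, Adj u w ↔ Adj v w) ∧ (∀ w, Adj w u ↔ Adj w v)

/-- The directed 4-cycle on `ZMod 4`. -/
def C4Adj : ZMod 4 → ZMod 4 → Prop := fun x y => y - x = 1 ∨ y - x = 3

/-- Cayley digraph of a group `G` with connection set `S`. -/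
def cayAdj (G : Type*) [Group G] (S : Set G) : G → G → Prop :=
  fun x y => y * x⁻¹ ∈ S

/-- The right-regular representation of `G` inside `Equiv.Perm G`. -/
def rightReg (G : Type*) [Group G] : Subgroup (Equiv.Perm G) where
  carrier := {e | ∃ g : G, ∀ x, e x = x * g}
  one_mem' := ⟨1, by simp⟩
  mul_mem' := by
    rintro a b ⟨g, hg⟩ ⟨h, hh⟩
    exact ⟨h * g, fun x => by simp [Equiv.Perm.mul_apply, hh, hg, mul_assoc]⟩
  inv_mem' := by
    rintro a ⟨g, hg⟩
    refine ⟨g⁻¹, fun x => a.injective ?_⟩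
    rw [← Equiv.Perm.mul_apply, mul_inv_cancel, Equiv.Perm.one_apply, hg]
    simp

/-- Cayley digraph of `ZMod n` with connection set `S`. -/
def zcayAdj (n : ℕ) (S : Set (ZMod n)) : ZMod n → ZMod n → Prop :=
  fun x y => y - x ∈ S

/-- The translation subgroup of `Equiv.Perm (ZMod n)`. -/
def transSub (n : ℕ) : Subgroup (Equiv.Perm (ZMod n)) where
  carrier := {e | ∃ g : ZMod n, ∀ x, e x = x + g}
  one_mem' := ⟨0, by simp⟩
  mul_mem' := by
    rintro a b ⟨g, hg⟩ ⟨h, hh⟩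
    exact ⟨h + g, fun x => by simp [Equiv.Perm.mul_apply, hh, hg, add_assoc]⟩
  inv_mem' := by
    rintro a ⟨g, hg⟩
    refine ⟨-g, fun x => a.injective ?_⟩
    rw [← Equiv.Perm.mul_apply, mul_inv_cancel, Equiv.Perm.one_apply, hg]
    simp

/-- `Cay(G,S)` is a CI-digraph. -/
def IsCIDigraph {G : Type*} [Group G] (S : Set G) : Prop :=
  ∀ T : Set G, DigraphIso (cayAdj G S) (cayAdj G T) → ∃ α : G ≃* G, T = ⇑α '' S

lemma mulRight_mem_rightReg {G : Type*} [Group G] (g : G) :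
    (Equiv.mulRight g : Equiv.Perm G) ∈ rightReg G :=
  ⟨g, fun _ => rfl⟩

lemma mem_rightReg_iff {G : Type*} [Group G] (h : Equiv.Perm G) :
    h ∈ rightReg G ↔ ∃ g : G, h = Equiv.mulRight g := by
  constructor
  · rintro ⟨g, hg⟩; exact ⟨g, Equiv.ext fun x => hg x⟩
  · rintro ⟨g, rfl⟩; exact mulRight_mem_rightReg g

lemma mem_conjMap_iff {G : Type*} [Group G] (σ h : Equiv.Perm G) :
    h ∈ Subgroup.map (MulAut.conj σ).toMonoidHom (rightReg G) ↔
      ∃ g : G, h = σ * Equiv.mulRight g * σ⁻¹ := by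
  constructor
  · rintro ⟨k, hk, rfl⟩
    obtain ⟨g, rfl⟩ := (mem_rightReg_iff k).mp hk
    exact ⟨g, rfl⟩
  · rintro ⟨g, rfl⟩
    exact ⟨Equiv.mulRight g, mulRight_mem_rightReg g, rfl⟩

theorem stmt10 {G : Type*} [Group G] [Fintype G] (S : Set G) :
    IsCIDigraph S ↔
    ∀ σ : Equiv.Perm G,
      Subgroup.map (MulAut.conj σ).toMonoidHom (rightReg G) ≤ autGroup (cayAdj G S) →
      ∃ τ ∈ autGroup (cayAdj G S),
        Subgroup.map (MulAut.conj σ).toMonoidHom (rightReg G) =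
          Subgroup.map (MulAut.conj τ).toMonoidHom (rightReg G) := by
  constructor
  · -- CI → conjugacy condition
    intro hS σ hσ
    -- invariance of the pulled-back adjacency
    have inv : ∀ g x y : G, cayAdj G S (σ x) (σ y) ↔ cayAdj G S (σ (x * g)) (σ (y * g)) := by
      intro g x y
      have hmem : σ * Equiv.mulRight g * σ⁻¹ ∈ autGroup (cayAdj G S) :=
        hσ ((mem_conjMap_iff σ _).mpr ⟨g, rfl⟩)
      have := hmem (σ x) (σ y)
      simpa [Equiv.Perm.mul_apply, Equiv.Perm.coe_inv] using this
    set T : Set G := {g | cayAdj G S (σ 1) (σ g)} with hTdef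
    have iso : ∀ x y : G, cayAdj G S x y ↔ cayAdj G T (σ⁻¹ x) (σ⁻¹ y) := by
      intro x y
      have h1 : cayAdj G T (σ⁻¹ x) (σ⁻¹ y) ↔
          cayAdj G S (σ 1) (σ (σ⁻¹ y * (σ⁻¹ x)⁻¹)) := Iff.rfl
      rw [h1, inv (σ⁻¹ x) 1 (σ⁻¹ y * (σ⁻¹ x)⁻¹)]
      simp [Equiv.Perm.coe_inv]
    obtain ⟨α, hT⟩ := hS T ⟨(σ⁻¹ : Equiv.Perm G), iso⟩
    refine ⟨σ * (α.toEquiv : Equiv.Perm G), ?_, ?_⟩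
    · intro x y
      have h2 : cayAdj G S (σ (α x)) (σ (α y)) ↔ cayAdj G T (α x) (α y) := by
        rw [iso (σ (α x)) (σ (α y))]
        simp [Equiv.Perm.coe_inv]
      have h3 : cayAdj G T (α x) (α y) ↔ cayAdj G S x y := by
        show α y * (α x)⁻¹ ∈ T ↔ y * x⁻¹ ∈ S
        rw [hT, ← map_inv, ← map_mul]
        exact α.injective.mem_set_image
      simpa [Equiv.Perm.mul_apply] using (h3.symm.trans h2.symm)
    · -- the two conjugates of the right regular representation coincide
      have hA : ∀ g : G, (α.toEquiv : Equiv.Perm G) * Equiv.mulRight g *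
          (α.toEquiv : Equiv.Perm G)⁻¹ = Equiv.mulRight (α g) := by
        intro g
        ext x
        show α (α.symm x * g) = x * α g
        rw [map_mul, MulEquiv.apply_symm_apply]
      ext h
      rw [mem_conjMap_iff, mem_conjMap_iff]
      constructor
      · rintro ⟨g, rfl⟩
        refine ⟨α.symm g, ?_⟩
        have := hA (α.symm g)
        rw [MulEquiv.apply_symm_apply] at this
        rw [← this]
        group
      · rintro ⟨g, rfl⟩
        refine ⟨α g, ?_⟩
        rw [← hA g]
        group
  · -- conjugacy condition → CI
    intro h T ⟨e, He⟩
    set σ : Equiv.Perm G := e.symm with hσdef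
    have hσinv : (σ : Equiv.Perm G)⁻¹ = (e : Equiv.Perm G) := rfl
    have hle : Subgroup.map (MulAut.conj σ).toMonoidHom (rightReg G) ≤
        autGroup (cayAdj G S) := by
      intro k hk
      obtain ⟨g, rfl⟩ := (mem_conjMap_iff σ k).mp hk
      intro x y
      have h1 : cayAdj G S x y ↔ cayAdj G T (e x) (e y) := He x y
      have h2 : cayAdj G T (e x) (e y) ↔ cayAdj G T (e x * g) (e y * g) := by
        show e y * (e x)⁻¹ ∈ T ↔ (e y * g) * (e x * g)⁻¹ ∈ T
        simp [mul_assoc]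
      have h3 : cayAdj G T (e x * g) (e y * g) ↔
          cayAdj G S (e.symm (e x * g)) (e.symm (e y * g)) := by
        rw [He (e.symm (e x * g)) (e.symm (e y * g))]
        simp
      rw [h1, h2, h3]
      constructor
      · intro hxy
        simpa [Equiv.Perm.mul_apply, hσinv] using hxy
      · intro hxy
        simpa [Equiv.Perm.mul_apply, hσinv] using hxy
    obtain ⟨τ, hτ, heq⟩ := h σ hle
    set β : Equiv.Perm G := τ⁻¹ * σ with hβdef
    have hσβ : ∀ x : G, σ x = τ (β x) := by
      intro x
      simp [hβdef, Equiv.Perm.mul_apply]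
    set c : G := β 1 with hcdef
    have key : ∀ g z : G, β (z * g) = β z * (c⁻¹ * β g) := by
      intro g z
      have hmem : σ * Equiv.mulRight g * σ⁻¹ ∈
          Subgroup.map (MulAut.conj τ).toMonoidHom (rightReg G) := by
        rw [← heq]; exact (mem_conjMap_iff σ _).mpr ⟨g, rfl⟩
      obtain ⟨g', hg'⟩ := (mem_conjMap_iff τ _).mp hmem
      -- β ∘ mulRight g = mulRight g' ∘ β
      have hswap : ∀ w : G, β (w * g) = β w * g' := by
        intro w
        have := congrArg (fun (p : Equiv.Perm G) => p (σ w)) hg'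
        simp only [Equiv.Perm.mul_apply, (by simp : σ⁻¹ (σ w) = w),
          Equiv.coe_mulRight] at this
        -- this : σ (w * g) = τ ((mulRight g') (τ⁻¹ (σ w)))
        have h4 : τ⁻¹ (σ w) = β w := by simp [hβdef, Equiv.Perm.mul_apply]
        rw [h4] at this
        have h5 : σ (w * g) = τ (β (w * g)) := hσβ (w * g)
        rw [h5] at this
        exact τ.injective this
      have h1 := hswap 1
      rw [one_mul] at h1
      have hg'' : g' = c⁻¹ * β g := by rw [h1, hcdef]; group
      rw [hswap z, hg'']
    -- build the automorphism φ : g ↦ β g * c⁻¹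
    have hmul : ∀ g h : G, β (g * h) * c⁻¹ = (β g * c⁻¹) * (β h * c⁻¹) := by
      intro g h
      rw [key h g]
      group
    refine ⟨MulEquiv.symm
      { toFun := fun g => β g * c⁻¹
        invFun := fun g => β⁻¹ (g * c)
        left_inv := by
          intro g
          simp [inv_mul_cancel_right]
        right_inv := by
          intro g
          simp [Equiv.Perm.coe_inv, inv_mul_cancel_right]
        map_mul' := hmul }, ?_⟩
    set φ : G ≃* G :=
      { toFun := fun g => β g * c⁻¹
        invFun := fun g => β⁻¹ (g * c)
        left_inv := by
          intro g
          simp [inv_mul_cancel_right]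
        right_inv := by
          intro g
          simp [Equiv.Perm.coe_inv, inv_mul_cancel_right]
        map_mul' := hmul } with hφdef
    have hTmem : ∀ g : G, g ∈ T ↔ φ g ∈ S := by
      intro g
      have h1 : g ∈ T ↔ cayAdj G T 1 g := by show _ ↔ g * 1⁻¹ ∈ T; simp
      have h2 : cayAdj G T 1 g ↔ cayAdj G S (σ 1) (σ g) := by
        rw [He (σ 1) (σ g)]
        simp [hσdef]
      have h3 : cayAdj G S (σ 1) (σ g) ↔ cayAdj G S (β 1) (β g) := by
        rw [hσβ 1, hσβ g]
        exact (hτ (β 1) (β g)).symm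
      rw [h1, h2, h3]
      show β g * (β 1)⁻¹ ∈ S ↔ β g * c⁻¹ ∈ S
      rw [← hcdef]
    ext t
    rw [hTmem]
    constructor
    · intro ht
      exact ⟨φ t, ht, φ.symm_apply_apply t⟩
    · rintro ⟨s, hs, rfl⟩
      rwa [φ.apply_symm_apply]
end

section
/- Let Γ be a loopless vertex-transitive digraph on a finite vertex type V that is R-thick. Then there exist an integer b ≥ 2, a finite type W, and a digraph Σ on W such that Γ is isomorphic to Σ[Kbar_b]. -/
theorem stmt12 {V : Type*} [Fintype V] (Adj : V → V → Prop)
    (hloopless : ∀ v, ¬ Adj v v)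
    (hvt : ∀ u v : V, ∃ e ∈ autGroup Adj, e u = v)
    (hthick : RThick Adj) :
    ∃ (b : ℕ) (W : Type) (_ : Fintype W) (Adj₂ : W → W → Prop),
      2 ≤ b ∧ DigraphIso Adj (lexAdj Adj₂ b) := by

  classical
  obtain ⟨u₀, v₀, hne, hout, hin⟩ := hthick
  set r : V → V → Prop := fun u v => (∀ w, Adj u w ↔ Adj v w) ∧ (∀ w, Adj w u ↔ Adj w v)
    with hr_def
  have hr_eq : Equivalence r :=
    ⟨fun _ => ⟨fun _ => Iff.rfl, fun _ => Iff.rfl⟩,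
     fun h => ⟨fun w => (h.1 w).symm, fun w => (h.2 w).symm⟩,
     fun h1 h2 => ⟨fun w => (h1.1 w).trans (h2.1 w), fun w => (h1.2 w).trans (h2.2 w)⟩⟩
  let s : Setoid V := ⟨r, hr_eq⟩
  -- automorphisms preserve r
  have haut : ∀ e ∈ autGroup Adj, ∀ x y, r x y → r (e x) (e y) := by
    intro e he x y hxy
    constructor
    · intro w
      have hw : e (e⁻¹ w) = w := e.apply_symm_apply w
      rw [← hw, ← he x (e⁻¹ w), ← he y (e⁻¹ w)]
      exact hxy.1 _
    · intro w
      have hw : e (e⁻¹ w) = w := e.apply_symm_apply w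
      rw [← hw, ← he (e⁻¹ w) x, ← he (e⁻¹ w) y]
      exact hxy.2 _
  -- all classes have the same size
  have hcard : ∀ u v : V, Fintype.card {x // r x u} = Fintype.card {x // r x v} := by
    intro u v
    obtain ⟨e, he, heu⟩ := hvt u v
    have he' : e⁻¹ ∈ autGroup Adj := (autGroup Adj).inv_mem he
    refine Fintype.card_congr (Equiv.subtypeEquiv e fun x => ⟨fun hx => ?_, fun hx => ?_⟩)
    · have := haut e he x u hx
      rwa [heu] at this
    · have h2 := haut e⁻¹ he' (e x) v hx
      rw [show e⁻¹ (e x) = x from e.symm_apply_apply x] at h2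
      have : (e⁻¹ : Equiv.Perm V) v = u := by
        rw [← heu, show e⁻¹ (e u) = u from e.symm_apply_apply u]
      rwa [this] at h2
  set b := Fintype.card {x // r x u₀} with hb_def
  have hb2 : 2 ≤ b := by
    have h1 : r u₀ u₀ := hr_eq.refl u₀
    have h2 : r v₀ u₀ := hr_eq.symm ⟨hout, hin⟩
    have : Nontrivial {x // r x u₀} :=
      ⟨⟨⟨u₀, h1⟩, ⟨v₀, h2⟩, by simp [hne]⟩⟩
    exact Fintype.one_lt_card
  -- the quotient digraph
  let W' := Quotient s
  letI : Fintype W' := Quotient.fintype s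
  have hwd : ∀ a b a' b' : V, r a a' → r b b' → Adj a b = Adj a' b' := by
    intro a c a' c' h1 h2
    exact propext ((h1.1 c).trans (h2.2 a'))
  let Adj₂ : W' → W' → Prop := Quotient.lift₂ Adj hwd
  -- fibers have card b
  have hfib : ∀ w : W', Fintype.card {v // Quotient.mk s v = w} = b := by
    intro w
    induction w using Quotient.ind with
    | _ u =>
      have : Fintype.card {v // Quotient.mk s v = Quotient.mk s u}
          = Fintype.card {v // r v u} :=
        Fintype.card_congr (Equiv.subtypeEquiv (Equiv.refl V) fun x => by
          simp only [Equiv.refl_apply]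
          exact Quotient.eq)
      rw [this, hb_def]
      exact hcard u u₀
  let F : ∀ w : W', {v // Quotient.mk s v = w} ≃ Fin b := fun w =>
    Fintype.equivFinOfCardEq (hfib w)
  let e₁ : V ≃ Σ w : W', {v // Quotient.mk s v = w} :=
    (Equiv.sigmaFiberEquiv (Quotient.mk s)).symm
  let e₂ : (Σ w : W', {v // Quotient.mk s v = w}) ≃ W' × Fin b :=
    Equiv.sigmaEquivProdOfEquiv F
  -- shrink W' to Type 0
  let φ : W' ≃ Fin (Fintype.card W') := Fintype.equivFin W'
  let Adj₃ : Fin (Fintype.card W') → Fin (Fintype.card W') → Prop :=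
    fun a c => Adj₂ (φ.symm a) (φ.symm c)
  refine ⟨b, Fin (Fintype.card W'), inferInstance, Adj₃, hb2, ?_⟩
  refine ⟨(e₁.trans e₂).trans (Equiv.prodCongr φ (Equiv.refl (Fin b))), ?_⟩
  intro x y
  have hx1 : (e₂ (e₁ x)).1 = Quotient.mk s x := rfl
  have hy1 : (e₂ (e₁ y)).1 = Quotient.mk s y := rfl
  show Adj x y ↔ lexAdj Adj₃ b _ _
  unfold lexAdj
  simp only [Equiv.trans_apply, Equiv.prodCongr_apply, Prod.map_fst]
  rw [hx1, hy1]
  show Adj x y ↔ Adj₂ (φ.symm (φ (Quotient.mk s x))) (φ.symm (φ (Quotient.mk s y)))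
  rw [φ.symm_apply_apply, φ.symm_apply_apply]
  exact Iff.rfl
end
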